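/- For any set of T unit-norm vectors v_1,...,v_T in R^d with T > d, the mutual coherence M = max_{i≠j} |⟨v_i, v_j⟩| satisfies M ≥ sqrt((T-d)/(d(T-1))) (the Welch bound). -/

import Mathlib

open RealInnerProductSpace

/-- Welch bound: any `T` unit-norm vectors in `ℝ^d` with `T > d ≥ 1` have mutual
coherence at least `√((T-d)/(d(T-1)))`. -/
theorem welch_bound (T d : ℕ) (hd : 1 ≤ d) (hTd : d < T)
    (v : Fin T → EuclideanSpace ℝ (Fin d)) (hv : ∀ i, ‖v i‖ = 1)
    (M : ℝ) (hM : ∀ i j : Fin T, i ≠ j → |⟪v i, v j⟫| ≤ M) :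
    Real.sqrt (((T : ℝ) - d) / (d * ((T : ℝ) - 1))) ≤ M := by
  have hT2 : 2 ≤ T := by omega
  have hM0 : 0 ≤ M := by
    refine le_trans (abs_nonneg _) (hM ⟨0, by omega⟩ ⟨1, by omega⟩ ?_)
    simp [Fin.ext_iff]
  have hinner : ∀ i j, ⟪v i, v j⟫ = ∑ k, v i k * v j k := by
    intro i j
    simp [PiLp.inner_apply, RCLike.inner_apply, conj_trivial]
    exact Finset.sum_congr rfl fun _ _ => mul_comm _ _
  have hnorm : ∀ i, ⟪v i, v i⟫ = 1 := by
    intro i; rw [real_inner_self_eq_norm_sq, hv i]; norm_num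
  set A : Fin d → Fin d → ℝ := fun k l => ∑ i, v i k * v i l with hA
  set S : ℝ := ∑ i, ∑ j, ⟪v i, v j⟫ ^ 2 with hS
  have htrace : ∑ k, A k k = (T : ℝ) := by
    rw [hA]
    simp only
    rw [Finset.sum_comm]
    have : ∀ i : Fin T, ∑ k, v i k * v i k = 1 := by
      intro i; rw [← hinner, hnorm]
    simp [this]
  have hSA : S = ∑ k, ∑ l, (A k l) ^ 2 := by
    have h1 : ∀ i j, ⟪v i, v j⟫ ^ 2 = ∑ k, ∑ l, (v i k * v i l) * (v j k * v j l) := by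
      intro i j
      rw [hinner, sq, Finset.sum_mul_sum]
      refine Finset.sum_congr rfl fun k _ => Finset.sum_congr rfl fun l _ => by ring
    have h2 : ∀ k l, (A k l) ^ 2 = ∑ i, ∑ j, (v i k * v i l) * (v j k * v j l) := by
      intro k l
      rw [hA, sq]
      simp only
      rw [Finset.sum_mul_sum]
    simp only [hS, h1, h2]
    set f : Fin T → Fin T → Fin d → Fin d → ℝ :=
      fun i j k l => (v i k * v i l) * (v j k * v j l) with hf
    calc ∑ i, ∑ j, ∑ k, ∑ l, f i j k l
        = ∑ i, ∑ k, ∑ j, ∑ l, f i j k l :=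
          Finset.sum_congr rfl fun i _ => Finset.sum_comm
      _ = ∑ k, ∑ i, ∑ j, ∑ l, f i j k l := Finset.sum_comm
      _ = ∑ k, ∑ i, ∑ l, ∑ j, f i j k l :=
          Finset.sum_congr rfl fun k _ => Finset.sum_congr rfl fun i _ => Finset.sum_comm
      _ = ∑ k, ∑ l, ∑ i, ∑ j, f i j k l :=
          Finset.sum_congr rfl fun k _ => Finset.sum_comm
  have h1 : (T : ℝ) ^ 2 ≤ d * S := by
    have c1 : (∑ k, A k k) ^ 2 ≤ (∑ k : Fin d, (A k k) ^ 2) * ∑ k : Fin d, (1:ℝ) ^ 2 := by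
      have := Finset.sum_mul_sq_le_sq_mul_sq Finset.univ (fun k => A k k) (fun _ => (1:ℝ))
      simpa using this
    have c2 : ∑ k : Fin d, (A k k) ^ 2 ≤ ∑ k, ∑ l, (A k l) ^ 2 := by
      refine Finset.sum_le_sum fun k _ => ?_
      exact Finset.single_le_sum (f := fun l => (A k l) ^ 2)
        (fun l _ => sq_nonneg _) (Finset.mem_univ k)
    calc (T : ℝ) ^ 2 = (∑ k, A k k) ^ 2 := by rw [htrace]
      _ ≤ (∑ k : Fin d, (A k k) ^ 2) * ∑ k : Fin d, (1:ℝ) ^ 2 := c1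
      _ = d * ∑ k : Fin d, (A k k) ^ 2 := by simp [mul_comm]
      _ ≤ d * S := by
          rw [hSA]
          exact mul_le_mul_of_nonneg_left c2 (by positivity)
  have h2 : S ≤ T + (T * (T - 1)) * M ^ 2 := by
    have hrow : ∀ i : Fin T, ∑ j, ⟪v i, v j⟫ ^ 2 ≤ 1 + ((T : ℝ) - 1) * M ^ 2 := by
      intro i
      rw [← Finset.add_sum_erase _ _ (Finset.mem_univ i), hnorm, one_pow]
      gcongr
      have hb : ∀ j ∈ Finset.univ.erase i, ⟪v i, v j⟫ ^ 2 ≤ M ^ 2 := by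
        intro j hj
        have hji : j ≠ i := Finset.ne_of_mem_erase hj
        have := hM i j (Ne.symm hji)
        calc ⟪v i, v j⟫ ^ 2 = |⟪v i, v j⟫| ^ 2 := (sq_abs _).symm
          _ ≤ M ^ 2 := pow_le_pow_left₀ (abs_nonneg _) this 2
      calc ∑ j ∈ Finset.univ.erase i, ⟪v i, v j⟫ ^ 2
          ≤ (Finset.univ.erase i).card • (M ^ 2) := Finset.sum_le_card_nsmul _ _ _ hb
        _ = ((T : ℝ) - 1) * M ^ 2 := by
            rw [Finset.card_erase_of_mem (Finset.mem_univ i), Finset.card_univ,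
              Fintype.card_fin, nsmul_eq_mul, Nat.cast_sub (by omega), Nat.cast_one]
    calc S ≤ ∑ _i : Fin T, (1 + ((T : ℝ) - 1) * M ^ 2) := Finset.sum_le_sum fun i _ => hrow i
      _ = T * (1 + ((T : ℝ) - 1) * M ^ 2) := by
          rw [Finset.sum_const, Finset.card_univ, Fintype.card_fin, nsmul_eq_mul]
      _ = T + (T * (T - 1)) * M ^ 2 := by ring
  -- combine
  have hdpos : (0:ℝ) < d := by exact_mod_cast hd
  have hTpos : (0:ℝ) < T := by positivity
  have hT1 : (0:ℝ) < (T : ℝ) - 1 := by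
    have : (2:ℝ) ≤ T := by exact_mod_cast hT2
    linarith
  have key : ((T : ℝ) - d) / (d * ((T : ℝ) - 1)) ≤ M ^ 2 := by
    rw [div_le_iff₀ (by positivity)]
    have h3 : (T : ℝ) ^ 2 ≤ d * (T + (T * (T - 1)) * M ^ 2) :=
      le_trans h1 (mul_le_mul_of_nonneg_left h2 hdpos.le)
    nlinarith [hTpos, hdpos]
  calc Real.sqrt (((T : ℝ) - d) / (d * ((T : ℝ) - 1))) ≤ Real.sqrt (M ^ 2) :=
        Real.sqrt_le_sqrt key
    _ = M := by rw [Real.sqrt_sq hM0]
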